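/- Let V : [a,b] → ℝ be differentiable with derivative V′ satisfying ∫_a^b |V′(x)|⁴ dx < ∞. There exists a constant C > 0, depending only on b−a and ‖V′‖_{L⁴(Ω)}, such that for every 0 < τ < 1, every positive even integer N, and every trigonometric polynomial W ∈ X_N, one has ‖ e^{−iτV} W ‖_{H¹(Ω)} ≤ (1 + Cτ) ‖ W ‖_{H¹(Ω)}. -/

import Mathlib

open MeasureTheory
open scoped Real

noncomputable section

namespace GPE

/-- Frequencies μ_l = 2πl/(b−a). -/
def freq (a b : ℝ) (l : ℤ) : ℝ := 2 * Real.pi * l / (b - a)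

/-- The Fourier mode e^{iμ_l(x−a)}. -/
def eMode (a b : ℝ) (l : ℤ) (x : ℝ) : ℂ :=
  Complex.exp (Complex.I * ((freq a b l * (x - a) : ℝ) : ℂ))

/-- Index set 𝒯_N = {−N/2, …, N/2 − 1}. -/
def idxSet (N : ℕ) : Finset ℤ := Finset.Ico (-(N : ℤ) / 2) ((N : ℤ) / 2)

/-- l-th Fourier coefficient û_l = (1/(b−a)) ∫_a^b u(x) e^{−iμ_l(x−a)} dx. -/
def fourierCoeffOn (a b : ℝ) (u : ℝ → ℂ) (l : ℤ) : ℂ :=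
  ((b - a : ℝ) : ℂ)⁻¹ *
    ∫ x in a..b, u x * Complex.exp (-(Complex.I * ((freq a b l * (x - a) : ℝ) : ℂ)))

/-- L²-projection P_N u = Σ_{l∈𝒯_N} û_l e^{iμ_l(x−a)}. -/
def projN (a b : ℝ) (N : ℕ) (u : ℝ → ℂ) : ℝ → ℂ :=
  fun x => ∑ l ∈ idxSet N, fourierCoeffOn a b u l * eMode a b l x

/-- Grid points x_j = a + j(b−a)/N. -/
def gridPt (a b : ℝ) (N : ℕ) (j : ℕ) : ℝ := a + j * ((b - a) / N)

/-- Discrete Fourier coefficient ṽ_l = (1/N) Σ_{j=0}^{N−1} v(x_j) e^{−iμ_l(x_j−a)}. -/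
def discreteCoeff (a b : ℝ) (N : ℕ) (v : ℝ → ℂ) (l : ℤ) : ℂ :=
  (N : ℂ)⁻¹ * ∑ j ∈ Finset.range N,
    v (gridPt a b N j) * Complex.exp (-(Complex.I * ((freq a b l * (gridPt a b N j - a) : ℝ) : ℂ)))

/-- Trigonometric interpolation I_N v = Σ_{l∈𝒯_N} ṽ_l e^{iμ_l(x−a)}. -/
def interpN (a b : ℝ) (N : ℕ) (v : ℝ → ℂ) : ℝ → ℂ :=
  fun x => ∑ l ∈ idxSet N, discreteCoeff a b N v l * eMode a b l x

/-- The free Schrödinger flow composed with projection: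
 e^{isΔ} P_N u = Σ_{l∈𝒯_N} e^{−isμ_l²} û_l e^{iμ_l(x−a)}. -/
def freeFlow (a b : ℝ) (N : ℕ) (s : ℝ) (u : ℝ → ℂ) : ℝ → ℂ :=
  fun x => ∑ l ∈ idxSet N,
    Complex.exp (-(Complex.I * ((s * freq a b l ^ 2 : ℝ) : ℂ))) * fourierCoeffOn a b u l *
      eMode a b l x

/-- Membership in X_N = span{e^{iμ_l(x−a)} : l ∈ 𝒯_N}. -/
def MemXN (a b : ℝ) (N : ℕ) (φ : ℝ → ℂ) : Prop :=
  ∃ c : ℤ → ℂ, φ = fun x => ∑ l ∈ idxSet N, c l * eMode a b l x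

/-- The nonlinear-phase map φ ↦ φ e^{−iτβ|φ|²}. -/
def nlPhase (β τ : ℝ) (φ : ℝ → ℂ) : ℝ → ℂ :=
  fun x => φ x * Complex.exp (-(Complex.I * ((τ * β * ‖φ x‖ ^ 2 : ℝ) : ℂ)))

/-- The LTeFP numerical flow Φ_τ(φ) = e^{iτΔ} P_N( e^{−iτV} · I_N( φ e^{−iτβ|φ|²} ) ). -/
def PhiLTeFP (a b : ℝ) (N : ℕ) (V : ℝ → ℝ) (β τ : ℝ) (φ : ℝ → ℂ) : ℝ → ℂ :=
  freeFlow a b N τ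
    (fun x => Complex.exp (-(Complex.I * ((τ * V x : ℝ) : ℂ))) * interpN a b N (nlPhase β τ φ) x)

/-- The LTFS numerical flow S_τ(φ) = e^{iτΔ} P_N( e^{−iτ(V+β|φ|²)} φ ). -/
def SLTFS (a b : ℝ) (N : ℕ) (V : ℝ → ℝ) (β τ : ℝ) (φ : ℝ → ℂ) : ℝ → ℂ :=
  freeFlow a b N τ
    (fun x =>
      Complex.exp (-(Complex.I * ((τ * (V x + β * ‖φ x‖ ^ 2) : ℝ) : ℂ))) * φ x)

/-- The STeFP numerical flow: φ ↦ e^{i(τ/2)Δ} P_N( e^{−iτV} · I_N( φ₁ e^{−iτβ|φ₁|²} ) )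
with φ₁ = e^{i(τ/2)Δ} φ. -/
def PhiSTeFP (a b : ℝ) (N : ℕ) (V : ℝ → ℝ) (β τ : ℝ) (φ : ℝ → ℂ) : ℝ → ℂ :=
  freeFlow a b N (τ / 2)
    (fun x => Complex.exp (-(Complex.I * ((τ * V x : ℝ) : ℂ))) *
      interpN a b N (nlPhase β τ (freeFlow a b N (τ / 2) φ)) x)

/-- LTeFP iterates: I_N ψ̂⁰ = I_N ψ₀ and I_N ψ̂^{n+1} = Φ_τ(I_N ψ̂ⁿ). -/
def LTeFPiter (a b : ℝ) (N : ℕ) (V : ℝ → ℝ) (β τ : ℝ) (ψ0 : ℝ → ℂ) : ℕ → ℝ → ℂ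
  | 0 => interpN a b N ψ0
  | n + 1 => PhiLTeFP a b N V β τ (LTeFPiter a b N V β τ ψ0 n)

/-- STeFP iterates. -/
def STeFPiter (a b : ℝ) (N : ℕ) (V : ℝ → ℝ) (β τ : ℝ) (ψ0 : ℝ → ℂ) : ℕ → ℝ → ℂ
  | 0 => interpN a b N ψ0
  | n + 1 => PhiSTeFP a b N V β τ (STeFPiter a b N V β τ ψ0 n)

/-- Sobolev H^m norm on (a,b): ‖u‖_{H^m} = (Σ_{k≤m} ‖u^{(k)}‖²_{L²(a,b)})^{1/2}. -/
def sobNorm (a b : ℝ) (m : ℕ) (u : ℝ → ℂ) : ℝ :=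
  Real.sqrt (∑ k ∈ Finset.range (m + 1), ∫ x in a..b, ‖iteratedDeriv k u x‖ ^ 2)

/-- Periodic boundary conditions of order m: u^{(k)}(a) = u^{(k)}(b) for k = 0,…,m−1. -/
def PerBC (a b : ℝ) (m : ℕ) (u : ℝ → ℂ) : Prop :=
  ∀ k < m, iteratedDeriv k u a = iteratedDeriv k u b

/-- ψ (with time derivative ψt) solves the GPE i∂_tψ = −∂_x²ψ + Vψ + β|ψ|²ψ
on [0,T] × [a,b]. -/
def IsGPESolution (a b T : ℝ) (V : ℝ → ℝ) (β : ℝ) (ψ ψt : ℝ → ℝ → ℂ) : Prop :=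
  ∀ t ∈ Set.Icc 0 T, ∀ x ∈ Set.Icc a b,
    HasDerivAt (fun s => ψ s x) (ψt t x) t ∧
    Complex.I * ψt t x =
      -(iteratedDeriv 2 (ψ t) x) + ((V x + β * ‖ψ t x‖ ^ 2 : ℝ) : ℂ) * ψ t x

end GPE

section Helpers

open GPE intervalIntegral

private lemma normE_eq_one (r : ℝ) : ‖Complex.exp (-(Complex.I * (r : ℂ)))‖ = 1 := by
  rw [Complex.norm_exp]
  simp

private lemma continuous_eMode (a b : ℝ) (l : ℤ) : Continuous (eMode a b l) := by
  unfold eMode; fun_prop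

private lemma hasDerivAt_eMode (a b : ℝ) (l : ℤ) (x : ℝ) :
    HasDerivAt (eMode a b l) (Complex.I * (freq a b l : ℂ) * eMode a b l x) x := by
  have h1 : HasDerivAt (fun x : ℝ => freq a b l * (x - a)) (freq a b l) x := by
    simpa using ((hasDerivAt_id x).sub_const a).const_mul (freq a b l)
  have h4 := ((h1.ofReal_comp).const_mul Complex.I).cexp
  unfold eMode
  convert h4 using 1
  ring

private lemma sq_split (τ x y : ℝ) (hτ : 0 < τ) :
    (x + y) ^ 2 ≤ (1 + τ) * x ^ 2 + (1 + τ⁻¹) * y ^ 2 := by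
  have h2 : τ * τ⁻¹ = 1 := mul_inv_cancel₀ hτ.ne'
  have h3 : 0 < τ⁻¹ := inv_pos.mpr hτ
  have key : 2 * x * y ≤ τ * x ^ 2 + τ⁻¹ * y ^ 2 := by
    have h1 : 0 ≤ τ⁻¹ * (τ * x - y) ^ 2 := mul_nonneg h3.le (sq_nonneg _)
    nlinarith [h1, h2]
  nlinarith [key]

/-- Agmon-type bound: sup of ‖W‖² on [a,b] by the H¹ data. -/
private lemma agmon_bound (a b : ℝ) (hab : a < b) (W W' : ℝ → ℂ)
    (hW : ∀ x, HasDerivAt W (W' x) x) (hcW' : Continuous W') :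
    ∀ x ∈ Set.Icc a b, ‖W x‖ ^ 2 ≤
      (1 / (b - a)) * (∫ t in a..b, ‖W t‖ ^ 2)
        + ((∫ t in a..b, ‖W t‖ ^ 2) + ∫ t in a..b, ‖W' t‖ ^ 2) := by
  have hcW : Continuous W := by
    rw [continuous_iff_continuousAt]; exact fun x => (hW x).continuousAt
  set F : ℝ → ℝ := fun t => ‖W t‖ ^ 2 with hFdef
  set G : ℝ → ℝ := fun t =>
    2 * (W t).re ^ 1 * (W' t).re + 2 * (W t).im ^ 1 * (W' t).im with hGdef
  have hFcont : Continuous F := (hcW.norm.pow 2)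
  have hGcont : Continuous G := by
    apply Continuous.add
    · exact (continuous_const.mul ((Complex.continuous_re.comp hcW).pow 1)).mul
        (Complex.continuous_re.comp hcW')
    · exact (continuous_const.mul ((Complex.continuous_im.comp hcW).pow 1)).mul
        (Complex.continuous_im.comp hcW')
  have hre : ∀ x, HasDerivAt (fun t => (W t).re) ((W' x).re) x := by
    intro x
    exact (Complex.reCLM.hasFDerivAt.comp_hasDerivAt x (hW x))
  have him : ∀ x, HasDerivAt (fun t => (W t).im) ((W' x).im) x := by
    intro x
    exact (Complex.imCLM.hasFDerivAt.comp_hasDerivAt x (hW x))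
  have hFd : ∀ x, HasDerivAt F (G x) x := by
    intro x
    have hFeq : F = fun t => (W t).re ^ 2 + (W t).im ^ 2 := by
      funext t
      rw [hFdef]
      simp [Complex.sq_norm, Complex.normSq_apply]
      ring
    rw [hFeq, hGdef]
    have h := (((hre x).pow 2)).add (((him x).pow 2))
    exact h.congr_deriv (by norm_num)
  have hGbound : ∀ t, |G t| ≤ F t + ‖W' t‖ ^ 2 := by
    intro t
    have h1 : G t = 2 * ((starRingEnd ℂ) (W t) * W' t).re := by
      rw [hGdef]
      simp [Complex.mul_re, Complex.conj_re, Complex.conj_im]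
      ring
    have h2 : |G t| ≤ 2 * (‖W t‖ * ‖W' t‖) := by
      rw [h1, abs_mul, abs_of_pos (by norm_num : (0:ℝ) < 2)]
      have h := Complex.abs_re_le_norm ((starRingEnd ℂ) (W t) * W' t)
      rw [norm_mul, Complex.norm_conj] at h
      exact mul_le_mul_of_nonneg_left h (by norm_num)
    have h3 := two_mul_le_add_sq ‖W t‖ ‖W' t‖
    show |G t| ≤ ‖W t‖ ^ 2 + ‖W' t‖ ^ 2
    nlinarith [h2, h3]
  -- minimum point
  obtain ⟨y, hy, hmin⟩ := isCompact_Icc.exists_isMinOn (Set.nonempty_Icc.mpr hab.le)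
    hFcont.continuousOn
  have hFy : F y ≤ (1 / (b - a)) * ∫ t in a..b, F t := by
    have h1 : (∫ _ in a..b, F y) ≤ ∫ t in a..b, F t :=
      integral_mono_on hab.le (intervalIntegrable_const) (hFcont.intervalIntegrable a b)
        (fun t ht => isMinOn_iff.mp hmin t ht)
    rw [intervalIntegral.integral_const, smul_eq_mul] at h1
    have hba : 0 < b - a := sub_pos.mpr hab
    rw [one_div, ← div_eq_inv_mul, le_div_iff₀ hba]
    nlinarith [h1]
  intro x hx
  have hFTC : ∫ t in y..x, G t = F x - F y :=
    integral_eq_sub_of_hasDerivAt (fun t _ => hFd t) (hGcont.intervalIntegrable y x)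
  have hGint : ∀ u v : ℝ, u ∈ Set.Icc a b → v ∈ Set.Icc a b → u ≤ v →
      (∫ t in u..v, |G t|) ≤ ∫ t in a..b, |G t| := by
    intro u v hu hv huv
    exact integral_mono_interval hu.1 huv hv.2
      (Filter.Eventually.of_forall (fun t => abs_nonneg _))
      (hGcont.abs.intervalIntegrable a b)
  have hkey : |∫ t in y..x, G t| ≤ ∫ t in a..b, |G t| := by
    rcases le_total y x with h | h
    · calc |∫ t in y..x, G t| ≤ ∫ t in y..x, |G t| := abs_integral_le_integral_abs h
        _ ≤ ∫ t in a..b, |G t| := hGint y x hy hx h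
    · rw [integral_symm, abs_neg]
      calc |∫ t in x..y, G t| ≤ ∫ t in x..y, |G t| := abs_integral_le_integral_abs h
        _ ≤ ∫ t in a..b, |G t| := hGint x y hx hy h
  have habsG : (∫ t in a..b, |G t|) ≤ (∫ t in a..b, F t) + ∫ t in a..b, ‖W' t‖ ^ 2 := by
    have := integral_mono_on (μ := MeasureTheory.volume) hab.le (hGcont.abs.intervalIntegrable a b)
      ((hFcont.add (hcW'.norm.pow 2)).intervalIntegrable a b)
      (fun t _ => hGbound t)
    have hi := integral_add (μ := MeasureTheory.volume) (hFcont.intervalIntegrable a b)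
      ((hcW'.norm.pow 2).intervalIntegrable a b)
    simp only [Pi.add_apply, Pi.pow_apply] at hi this
    linarith
  have : F x ≤ F y + ∫ t in a..b, |G t| := by
    have h1 : F x - F y ≤ |∫ t in y..x, G t| := by
      rw [hFTC] at *
      exact le_abs_self _
    linarith [hkey]
  calc ‖W x‖ ^ 2 = F x := rfl
    _ ≤ F y + ∫ t in a..b, |G t| := this
    _ ≤ (1 / (b - a)) * (∫ t in a..b, F t)
        + ((∫ t in a..b, F t) + ∫ t in a..b, ‖W' t‖ ^ 2) := by linarith [hFy, habsG]

end Helpers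

open GPE intervalIntegral in
set_option maxHeartbeats 1000000 in
/-- Multiplier estimate: if V is differentiable on [a,b] with ‖V′‖_{L⁴(a,b)} < ∞, then
for all 0 < τ < 1 and all trigonometric polynomials W ∈ X_N,
‖e^{−iτV} W‖_{H¹} ≤ (1 + Cτ)‖W‖_{H¹}, with C depending only on b−a and ‖V′‖_{L⁴}. -/
theorem multiplier_estimate_H1
    (a b : ℝ) (hab : a < b) (V : ℝ → ℝ)
    (hVd : ∀ x ∈ Set.Icc a b, HasDerivAt V (deriv V x) x)
    (hV'4 : IntervalIntegrable (fun x => |deriv V x| ^ 4) MeasureTheory.volume a b) :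
    ∃ C > (0 : ℝ), ∀ τ : ℝ, 0 < τ → τ < 1 →
      ∀ N : ℕ, 0 < N → Even N →
      ∀ W : ℝ → ℂ, MemXN a b N W →
        sobNorm a b 1 (fun x => Complex.exp (-(Complex.I * ((τ * V x : ℝ) : ℂ))) * W x)
          ≤ (1 + C * τ) * sobNorm a b 1 W := by
  have hba : 0 < b - a := sub_pos.mpr hab
  set M : ℝ := ∫ x in a..b, |deriv V x| ^ 2 with hM
  have hMnn : 0 ≤ M := intervalIntegral.integral_nonneg hab.le (fun x _ => by positivity)
  set K : ℝ := 1 / (b - a) + 1 with hK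
  have hKpos : 0 < K := by positivity
  refine ⟨1 + 2 * M * K, by positivity, ?_⟩
  intro τ hτ hτ1 N hN hNe W0 hWX
  obtain ⟨c, rfl⟩ := hWX
  set C : ℝ := 1 + 2 * M * K with hC
  have hCpos : 0 < C := by positivity
  set W : ℝ → ℂ := fun x => ∑ l ∈ idxSet N, c l * eMode a b l x with hWdef
  set W' : ℝ → ℂ := fun x =>
    ∑ l ∈ idxSet N, c l * (Complex.I * (freq a b l : ℂ) * eMode a b l x) with hW'def
  have hW : ∀ x, HasDerivAt W (W' x) x := fun x =>
    HasDerivAt.fun_sum (fun l _ => (hasDerivAt_eMode a b l x).const_mul (c l))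
  have hcW : Continuous W :=
    continuous_finset_sum _ fun l _ => continuous_const.mul (continuous_eMode a b l)
  have hcW' : Continuous W' :=
    continuous_finset_sum _ fun l _ =>
      continuous_const.mul (continuous_const.mul (continuous_eMode a b l))
  set u : ℝ → ℂ := fun x => Complex.exp (-(Complex.I * ((τ * V x : ℝ) : ℂ))) * W x with hu
  -- derivative of u on [a,b]
  have hud : ∀ x ∈ Set.Icc a b, HasDerivAt u
      (Complex.exp (-(Complex.I * ((τ * V x : ℝ) : ℂ))) * -(Complex.I * ((τ * deriv V x : ℝ) : ℂ)) * W x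
        + Complex.exp (-(Complex.I * ((τ * V x : ℝ) : ℂ))) * W' x) x := by
    intro x hx
    have hV := hVd x hx
    have h2 : HasDerivAt (fun y => ((τ * V y : ℝ) : ℂ)) ((τ * deriv V x : ℝ) : ℂ) x :=
      (hV.const_mul τ).ofReal_comp
    have h3 := ((h2.const_mul Complex.I).neg).cexp
    exact h3.mul (hW x)
  have hnorm : ∀ x ∈ Set.Icc a b,
      ‖deriv u x‖ ≤ ‖W' x‖ + τ * |deriv V x| * ‖W x‖ := by
    intro x hx
    rw [(hud x hx).deriv]
    have e2 : ‖Complex.exp (-(Complex.I * ((τ * V x : ℝ) : ℂ)))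
        * -(Complex.I * ((τ * deriv V x : ℝ) : ℂ)) * W x‖ = τ * |deriv V x| * ‖W x‖ := by
      rw [norm_mul, norm_mul, normE_eq_one, one_mul, norm_neg, norm_mul, Complex.norm_I,
        one_mul, Complex.norm_real, Real.norm_eq_abs, abs_mul, abs_of_pos hτ]
    have e3 : ‖Complex.exp (-(Complex.I * ((τ * V x : ℝ) : ℂ))) * W' x‖ = ‖W' x‖ := by
      rw [norm_mul, normE_eq_one, one_mul]
    refine le_trans (norm_add_le _ _) ?_
    rw [e2, e3]
    linarith
  -- H¹ data
  have hQraw := agmon_bound a b hab W W' hW hcW'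
  set A : ℝ := ∫ t in a..b, ‖W t‖ ^ 2 with hA
  set B : ℝ := ∫ t in a..b, ‖W' t‖ ^ 2 with hB
  have hA0 : 0 ≤ A := by
    rw [hA]; exact intervalIntegral.integral_nonneg hab.le (fun x _ => by positivity)
  have hB0 : 0 ≤ B := by
    rw [hB]; exact intervalIntegral.integral_nonneg hab.le (fun x _ => by positivity)
  set Q : ℝ := 1 / (b - a) * A + (A + B) with hQdef
  have hQ : ∀ x ∈ Set.Icc a b, ‖W x‖ ^ 2 ≤ Q := hQraw
  have hQ0 : 0 ≤ Q := le_trans (by positivity : (0:ℝ) ≤ ‖W a‖ ^ 2)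
    (hQ a ⟨le_refl a, hab.le⟩)
  have hQK : Q ≤ K * (A + B) := by
    have h1 : A ≤ A + B := le_add_of_nonneg_right hB0
    have h2 : 1 / (b - a) * A ≤ 1 / (b - a) * (A + B) :=
      mul_le_mul_of_nonneg_left h1 (by positivity)
    rw [hQdef, hK]
    nlinarith [h2]
  -- squared pointwise bound
  have hsq : ∀ x ∈ Set.Icc a b, ‖deriv u x‖ ^ 2 ≤
      (1 + τ) * ‖W' x‖ ^ 2 + (1 + τ⁻¹) * (τ ^ 2 * (|deriv V x| ^ 2 * ‖W x‖ ^ 2)) := by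
    intro x hx
    have h2 : ‖deriv u x‖ ^ 2 ≤ (‖W' x‖ + τ * |deriv V x| * ‖W x‖) ^ 2 :=
      pow_le_pow_left₀ (norm_nonneg _) (hnorm x hx) 2
    refine h2.trans ?_
    refine (sq_split τ ‖W' x‖ (τ * |deriv V x| * ‖W x‖) hτ).trans (le_of_eq ?_)
    ring
  -- integrability
  have hdVm : Measurable (deriv V) := measurable_deriv V
  have hV'2 : IntervalIntegrable (fun x => |deriv V x| ^ 2) MeasureTheory.volume a b := by
    refine IntervalIntegrable.mono_fun (g := fun x => |deriv V x| ^ 2)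
      (_root_.intervalIntegrable_const (c := (1:ℝ)) |>.add hV'4)
      ((hdVm.abs.pow_const 2).aestronglyMeasurable) ?_
    refine Filter.Eventually.of_forall (fun x => ?_)
    simp only [Real.norm_eq_abs]
    rw [abs_of_nonneg (by positivity : (0:ℝ) ≤ |deriv V x| ^ 2),
      abs_of_nonneg (by positivity : (0:ℝ) ≤ 1 + |deriv V x| ^ 4)]
    nlinarith [sq_nonneg (|deriv V x| ^ 2 - 1), sq_nonneg (|deriv V x|)]
  obtain ⟨M1, hM1⟩ := isCompact_Icc.exists_bound_of_continuousOn hcW.continuousOn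
  obtain ⟨M2, hM2⟩ := isCompact_Icc.exists_bound_of_continuousOn hcW'.continuousOn
  have hprodb : ∀ x ∈ Set.Icc a b,
      |deriv V x| ^ 2 * ‖W x‖ ^ 2 ≤ M1 ^ 2 * |deriv V x| ^ 2 := by
    intro x hx
    calc |deriv V x| ^ 2 * ‖W x‖ ^ 2
        ≤ |deriv V x| ^ 2 * M1 ^ 2 :=
          mul_le_mul_of_nonneg_left
            (pow_le_pow_left₀ (norm_nonneg _) (hM1 x hx) 2) (by positivity)
      _ = M1 ^ 2 * |deriv V x| ^ 2 := mul_comm _ _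
  have hprodint : IntervalIntegrable (fun x => |deriv V x| ^ 2 * ‖W x‖ ^ 2)
      MeasureTheory.volume a b := by
    refine IntervalIntegrable.mono_fun (hV'2.const_mul (M1 ^ 2))
      (((hdVm.abs.pow_const 2).mul (hcW.measurable.norm.pow_const 2)).aestronglyMeasurable) ?_
    rw [Set.uIoc_of_le hab.le]
    filter_upwards [MeasureTheory.ae_restrict_mem measurableSet_Ioc] with x hx
    have hxI : x ∈ Set.Icc a b := Set.Ioc_subset_Icc_self hx
    simp only [Real.norm_eq_abs]
    rw [abs_of_nonneg (by positivity : (0:ℝ) ≤ |deriv V x| ^ 2 * ‖W x‖ ^ 2),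
      abs_of_nonneg (by positivity : (0:ℝ) ≤ M1 ^ 2 * |deriv V x| ^ 2)]
    exact hprodb x hxI
  have hu'int : IntervalIntegrable (fun x => ‖deriv u x‖ ^ 2) MeasureTheory.volume a b := by
    refine IntervalIntegrable.mono_fun
      ((_root_.intervalIntegrable_const (c := (1 + τ) * M2 ^ 2)).add
        (hV'2.const_mul ((1 + τ⁻¹) * τ ^ 2 * M1 ^ 2)))
      (((measurable_deriv u).norm.pow_const 2).aestronglyMeasurable) ?_
    rw [Set.uIoc_of_le hab.le]
    filter_upwards [MeasureTheory.ae_restrict_mem measurableSet_Ioc] with x hx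
    have hxI : x ∈ Set.Icc a b := Set.Ioc_subset_Icc_self hx
    have h1 := hsq x hxI
    have hτi : (0:ℝ) ≤ 1 + τ⁻¹ := by positivity
    have hw2' : ‖W' x‖ ^ 2 ≤ M2 ^ 2 := pow_le_pow_left₀ (norm_nonneg _) (hM2 x hxI) 2
    have t1 : (1 + τ) * ‖W' x‖ ^ 2 ≤ (1 + τ) * M2 ^ 2 :=
      mul_le_mul_of_nonneg_left hw2' (by positivity)
    have t2 : (1 + τ⁻¹) * (τ ^ 2 * (|deriv V x| ^ 2 * ‖W x‖ ^ 2))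
        ≤ (1 + τ⁻¹) * τ ^ 2 * M1 ^ 2 * |deriv V x| ^ 2 := by
      have h2 : τ ^ 2 * (|deriv V x| ^ 2 * ‖W x‖ ^ 2)
          ≤ τ ^ 2 * (M1 ^ 2 * |deriv V x| ^ 2) :=
        mul_le_mul_of_nonneg_left (hprodb x hxI) (by positivity)
      calc (1 + τ⁻¹) * (τ ^ 2 * (|deriv V x| ^ 2 * ‖W x‖ ^ 2))
          ≤ (1 + τ⁻¹) * (τ ^ 2 * (M1 ^ 2 * |deriv V x| ^ 2)) :=
            mul_le_mul_of_nonneg_left h2 hτi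
        _ = (1 + τ⁻¹) * τ ^ 2 * M1 ^ 2 * |deriv V x| ^ 2 := by ring
    simp only [Real.norm_eq_abs]
    rw [abs_of_nonneg (by positivity : (0:ℝ) ≤ ‖deriv u x‖ ^ 2),
      abs_of_nonneg (by positivity :
        (0:ℝ) ≤ (1 + τ) * M2 ^ 2 + (1 + τ⁻¹) * τ ^ 2 * M1 ^ 2 * |deriv V x| ^ 2)]
    linarith [h1, t1, t2]
  have hterm1 : IntervalIntegrable (fun x => (1 + τ) * ‖W' x‖ ^ 2)
      MeasureTheory.volume a b := ((hcW'.norm.pow 2).intervalIntegrable a b).const_mul _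
  have hterm2 : IntervalIntegrable
      (fun x => (1 + τ⁻¹) * (τ ^ 2 * (|deriv V x| ^ 2 * ‖W x‖ ^ 2)))
      MeasureTheory.volume a b := (hprodint.const_mul (τ ^ 2)).const_mul (1 + τ⁻¹)
  have step1 : (∫ x in a..b, ‖deriv u x‖ ^ 2)
      ≤ ∫ x in a..b, ((1 + τ) * ‖W' x‖ ^ 2
          + (1 + τ⁻¹) * (τ ^ 2 * (|deriv V x| ^ 2 * ‖W x‖ ^ 2))) :=
    integral_mono_on hab.le hu'int (hterm1.add hterm2) hsq
  have step2 : (∫ x in a..b, ((1 + τ) * ‖W' x‖ ^ 2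
        + (1 + τ⁻¹) * (τ ^ 2 * (|deriv V x| ^ 2 * ‖W x‖ ^ 2))))
      = (1 + τ) * B + (1 + τ⁻¹) * (τ ^ 2 * ∫ x in a..b, |deriv V x| ^ 2 * ‖W x‖ ^ 2) := by
    rw [integral_add hterm1 hterm2, intervalIntegral.integral_const_mul, intervalIntegral.integral_const_mul,
      intervalIntegral.integral_const_mul, hB]
  have step3 : (∫ x in a..b, |deriv V x| ^ 2 * ‖W x‖ ^ 2) ≤ Q * M := by
    have h := integral_mono_on (μ := MeasureTheory.volume) hab.le hprodint
      (hV'2.const_mul Q) (fun x hx => by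
        calc |deriv V x| ^ 2 * ‖W x‖ ^ 2 ≤ |deriv V x| ^ 2 * Q :=
              mul_le_mul_of_nonneg_left (hQ x hx) (by positivity)
          _ = Q * |deriv V x| ^ 2 := mul_comm _ _)
    rwa [intervalIntegral.integral_const_mul, ← hM] at h
  have hin : (∫ x in a..b, ‖deriv u x‖ ^ 2)
      ≤ (1 + τ) * B + (1 + τ⁻¹) * (τ ^ 2 * (Q * M)) := by
    refine (step1.trans (le_of_eq step2)).trans ?_
    have h1 : τ ^ 2 * (∫ x in a..b, |deriv V x| ^ 2 * ‖W x‖ ^ 2) ≤ τ ^ 2 * (Q * M) :=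
      mul_le_mul_of_nonneg_left step3 (by positivity)
    have h2 := mul_le_mul_of_nonneg_left h1 (by positivity : (0:ℝ) ≤ 1 + τ⁻¹)
    linarith
  -- total squared bound
  have htot : A + (∫ x in a..b, ‖deriv u x‖ ^ 2) ≤ (1 + C * τ) ^ 2 * (A + B) := by
    have e1 : (1 + τ⁻¹) * (τ ^ 2 * (Q * M)) = (τ ^ 2 + τ) * (Q * M) := by
      field_simp
    have hQM0 : 0 ≤ Q * M := mul_nonneg hQ0 hMnn
    have hττ : τ ^ 2 ≤ τ := by nlinarith [hτ.le, hτ1.le]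
    have hQM : Q * M ≤ K * (A + B) * M := mul_le_mul_of_nonneg_right hQK hMnn
    have c1 : (τ ^ 2 + τ) * (Q * M) ≤ 2 * τ * (K * (A + B) * M) := by
      apply mul_le_mul (by linarith) hQM hQM0 (by positivity)
    have c2 : A + ((1 + τ) * B + 2 * τ * (K * (A + B) * M)) ≤ (1 + C * τ) * (A + B) := by
      rw [hC]
      have h3 : τ * B ≤ τ * (A + B) := mul_le_mul_of_nonneg_left (by linarith) hτ.le
      nlinarith [h3]
    have hC1 : (1 + C * τ) * (A + B) ≤ (1 + C * τ) ^ 2 * (A + B) := by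
      have h4 : (0:ℝ) ≤ C * τ := by positivity
      have h5 : (0:ℝ) ≤ 1 + C * τ := by linarith
      have h6 : (0:ℝ) ≤ A + B := by linarith
      nlinarith [mul_nonneg (mul_nonneg h4 h5) h6]
    calc A + (∫ x in a..b, ‖deriv u x‖ ^ 2)
        ≤ A + ((1 + τ) * B + (τ ^ 2 + τ) * (Q * M)) := by rw [← e1]; linarith [hin]
      _ ≤ A + ((1 + τ) * B + 2 * τ * (K * (A + B) * M)) := by linarith [c1]
      _ ≤ (1 + C * τ) * (A + B) := c2
      _ ≤ (1 + C * τ) ^ 2 * (A + B) := hC1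
  -- expand sobNorm and conclude
  have expand : ∀ f : ℝ → ℂ, sobNorm a b 1 f
      = Real.sqrt ((∫ x in a..b, ‖f x‖ ^ 2) + ∫ x in a..b, ‖deriv f x‖ ^ 2) := by
    intro f
    rw [sobNorm]
    congr 1
    rw [Finset.sum_range_succ, Finset.sum_range_one]
    simp [iteratedDeriv_one]
  have hnu : ∀ x, ‖u x‖ ^ 2 = ‖W x‖ ^ 2 := by
    intro x
    rw [hu]
    simp only []
    rw [norm_mul, normE_eq_one, one_mul]
  have hdw : ∀ x, deriv W x = W' x := fun x => (hW x).deriv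
  rw [expand u, expand W]
  simp only [hnu, hdw]
  rw [← hA, ← hB]
  calc Real.sqrt (A + ∫ x in a..b, ‖deriv u x‖ ^ 2)
      ≤ Real.sqrt ((1 + C * τ) ^ 2 * (A + B)) := Real.sqrt_le_sqrt htot
    _ = (1 + C * τ) * Real.sqrt (A + B) := by
        rw [Real.sqrt_mul (sq_nonneg _), Real.sqrt_sq (by positivity)]
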